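/- Let x be a rich infinite word. Then x is recurrent if and only if the set of factors of x is closed under reversal. -/
import Mathlib


/-- The finset of (distinct) palindromic factors of a finite word `w`,
including the empty word. -/
def palFactors {A : Type*} [DecidableEq A] (w : List A) : Finset (List A) :=
  ((w.inits.flatMap List.tails).filter (fun u => u.reverse = u)).toFinset

/-- A finite word `w` is rich if it has exactly `|w| + 1` distinct palindromic factors. -/
def Rich {A : Type*} [DecidableEq A] (w : List A) : Prop :=
  (palFactors w).card = w.length + 1

/-- A finite word `u` occurs in the infinite word `x : ℕ → A` at position `i`. -/
def OccursAt {A : Type*} (u : List A) (x : ℕ → A) (i : ℕ) : Prop :=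
  u = (List.range u.length).map fun k => x (i + k)

/-- A finite word `u` is a factor of the infinite word `x : ℕ → A` if it occurs
at some position `i` in `x`. -/
def FactorOfInf {A : Type*} (u : List A) (x : ℕ → A) : Prop :=
  ∃ i : ℕ, OccursAt u x i

/-- An infinite word is rich if all of its factors are rich. -/
def RichInf {A : Type*} [DecidableEq A] (x : ℕ → A) : Prop :=
  ∀ u : List A, FactorOfInf u x → Rich u

/-- An infinite word is recurrent if each of its factors occurs at infinitely many
positions. -/
def Recurrent {A : Type*} (x : ℕ → A) : Prop :=
  ∀ u : List A, FactorOfInf u x → ∀ N : ℕ, ∃ i : ℕ, N ≤ i ∧ OccursAt u x i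

namespace RichAux

variable {A : Type*}

def seg (x : ℕ → A) (i n : ℕ) : List A := (List.range n).map fun k => x (i + k)

@[simp] lemma seg_length (x : ℕ → A) (i n : ℕ) : (seg x i n).length = n := by simp [seg]

lemma occursAt_iff {u : List A} {x : ℕ → A} {i : ℕ} :
    OccursAt u x i ↔ u = seg x i u.length := Iff.rfl

lemma occursAt_seg (x : ℕ → A) (i n : ℕ) : OccursAt (seg x i n) x i := by
  rw [occursAt_iff, seg_length]

lemma seg_add (x : ℕ → A) (i m n : ℕ) :
    seg x i (m + n) = seg x i m ++ seg x (i + m) n := by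
  simp [seg, List.range_add, List.map_map, Function.comp, add_assoc]

lemma seg_factor (x : ℕ → A) (i n : ℕ) : FactorOfInf (seg x i n) x :=
  ⟨i, occursAt_seg x i n⟩

lemma append3_inj {a b c a' b' c' : List A}
    (h : a ++ (b ++ c) = a' ++ (b' ++ c')) (h1 : a.length = a'.length)
    (h2 : b.length = b'.length) : a = a' ∧ b = b' ∧ c = c' := by
  obtain ⟨ha, h'⟩ := List.append_inj h h1
  obtain ⟨hb, hc⟩ := List.append_inj h' h2
  exact ⟨ha, hb, hc⟩

lemma occursAt_append {u v : List A} {x : ℕ → A} {i : ℕ} :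
    OccursAt (u ++ v) x i ↔ OccursAt u x i ∧ OccursAt v x (i + u.length) := by
  rw [occursAt_iff, occursAt_iff, occursAt_iff, List.length_append, seg_add]
  constructor
  · intro h
    obtain ⟨h1, h2⟩ := List.append_inj h (by simp)
    exact ⟨h1, h2⟩
  · rintro ⟨h1, h2⟩
    rw [← h1, ← h2]

lemma factor_of_infix {u v : List A} {x : ℕ → A} (h : u <:+: v)
    (hv : FactorOfInf v x) : FactorOfInf u x := by
  obtain ⟨s, t, rfl⟩ := h
  obtain ⟨i, hi⟩ := hv
  rw [show s ++ u ++ t = s ++ (u ++ t) by simp] at hi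
  rw [occursAt_append, occursAt_append] at hi
  exact ⟨i + s.length, hi.2.1⟩

lemma seg_congr {x : ℕ → A} {a b m : ℕ} (h : seg x a m = seg x b m)
    {t l : ℕ} (ht : t + l ≤ m) : seg x (a + t) l = seg x (b + t) l := by
  apply List.ext_getElem (by simp)
  intro k hk1 hk2
  have hk : t + k < m := by simp at hk1; omega
  have := congrArg (fun w => w[t + k]?) h
  simp only [seg, List.getElem?_map, List.getElem?_range, hk] at this ⊢
  simp only [List.getElem_map, List.getElem_range]
  simp only [List.getElem?_range, hk, Option.map_some] at this
  have h2 : x (a + (t + k)) = x (b + (t + k)) := by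
    simpa using this
  simpa [add_assoc] using h2

lemma infix_seg_iff {u : List A} {x : ℕ → A} {i n : ℕ} :
    u <:+: seg x i n ↔ ∃ d, d + u.length ≤ n ∧ OccursAt u x (i + d) := by
  constructor
  · rintro ⟨s, t, h⟩
    have hlen : s.length + (u.length + t.length) = n := by
      have := congrArg List.length h
      simpa [add_assoc] using this
    rw [← hlen, seg_add, seg_add, List.append_assoc] at h
    obtain ⟨h1, h2⟩ := List.append_inj h (by simp)
    obtain ⟨h3, h4⟩ := List.append_inj h2 (by simp)
    exact ⟨s.length, by omega, occursAt_iff.mpr h3⟩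
  · rintro ⟨d, hd, h⟩
    rw [occursAt_iff] at h
    refine ⟨seg x i d, seg x (i + d + u.length) (n - d - u.length), ?_⟩
    rw [show n = d + (u.length + (n - d - u.length)) by omega, seg_add, seg_add, h]
    simp [List.append_assoc]

lemma mem_palFactors [DecidableEq A] {w u : List A} :
    u ∈ palFactors w ↔ u <:+: w ∧ u.reverse = u := by
  simp only [palFactors, List.mem_toFinset, List.mem_filter, List.mem_flatMap,
    List.mem_inits, List.mem_tails, decide_eq_true_eq]
  constructor
  · rintro ⟨⟨v, hv, hu⟩, hpal⟩
    exact ⟨hu.isInfix.trans hv.isInfix, hpal⟩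
  · rintro ⟨⟨s, t, rfl⟩, hpal⟩
    exact ⟨⟨s ++ u, ⟨t, by simp⟩, ⟨s, rfl⟩⟩, hpal⟩

lemma exists_new_pal [DecidableEq A] {x : ℕ → A} (hx : RichInf x) {L : ℕ} (hL : 1 ≤ L) :
    ∃ s : List A, s ∈ palFactors (seg x 0 L) ∧ s ∉ palFactors (seg x 0 (L - 1)) := by
  by_contra hcon
  push_neg at hcon
  have hsub : palFactors (seg x 0 L) ⊆ palFactors (seg x 0 (L - 1)) := hcon
  have hc1 : (palFactors (seg x 0 L)).card = L + 1 := by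
    have := hx _ ⟨0, occursAt_seg x 0 L⟩
    simpa [Rich] using this
  have hc2 : (palFactors (seg x 0 (L - 1))).card = L := by
    have := hx _ ⟨0, occursAt_seg x 0 (L - 1)⟩
    simp only [Rich, seg_length] at this
    omega
  have := Finset.card_le_card hsub
  omega

lemma rev_prefix_factor [DecidableEq A] {x : ℕ → A} (hx : RichInf x)
    (hrec : Recurrent x) (m : ℕ) : FactorOfInf (seg x 0 m).reverse x := by
  obtain ⟨k, hk1, hk⟩ := hrec (seg x 0 m) (seg_factor x 0 m) 1
  have hk' : seg x 0 m = seg x k m := by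
    have := occursAt_iff.mp hk; simpa using this
  set L := k + m with hLdef
  obtain ⟨s, hs, hs'⟩ := exists_new_pal hx (show 1 ≤ L by omega)
  rw [mem_palFactors] at hs
  obtain ⟨d, hd, hocc⟩ := infix_seg_iff.mp hs.1
  rw [occursAt_iff] at hocc
  have hocc : s = seg x d s.length := by simpa using hocc
  have hnotw' : ¬ s <:+: seg x 0 (L - 1) := fun h => hs' (mem_palFactors.mpr ⟨h, hs.2⟩)
  have hend : d + s.length = L := by
    by_contra hne
    apply hnotw'
    rw [infix_seg_iff]
    refine ⟨d, by omega, ?_⟩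
    rw [occursAt_iff, zero_add]
    exact hocc
  have hmlen : m < s.length := by
    by_contra hle
    push_neg at hle
    apply hnotw'
    rw [infix_seg_iff]
    refine ⟨m - s.length, by omega, ?_⟩
    have e : seg x (k + (m - s.length)) s.length = seg x (0 + (m - s.length)) s.length :=
      seg_congr hk'.symm (by omega)
    rw [occursAt_iff]
    rw [← e, show k + (m - s.length) = d by omega]
    exact hocc
  have hseq : s = seg x d (k - d) ++ seg x k m := by
    rw [hocc, show s.length = (k - d) + m by omega, seg_add,
      show d + (k - d) = k by omega]
  have hinf : seg x 0 m <:+: s := by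
    rw [hk']
    exact ⟨seg x d (k - d), [], by simp [hseq]⟩
  have hinfrev : (seg x 0 m).reverse <:+: s := by
    rw [← hs.2]
    exact List.reverse_infix.mpr hinf
  exact factor_of_infix hinfrev (factor_of_infix hs.1 (seg_factor x 0 L))

lemma occurs_positive {x : ℕ → A}
    (hcl : ∀ u : List A, FactorOfInf u x → FactorOfInf u.reverse x) (n : ℕ) :
    ∃ j, 1 ≤ j ∧ OccursAt (seg x 0 n) x j := by
  obtain ⟨i, hi⟩ := hcl _ (seg_factor x 0 n)
  have hi' : (seg x 0 n).reverse = seg x i n := by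
    have := occursAt_iff.mp hi; simpa using this
  obtain ⟨j, hj⟩ := hcl _ (seg_factor x 0 (i + n + 1))
  have hj' : (seg x 0 (i + n + 1)).reverse = seg x j (i + n + 1) := by
    have := occursAt_iff.mp hj; simpa using this
  refine ⟨j + 1, by omega, ?_⟩
  have e1 : seg x 0 (i + n + 1) = seg x 0 i ++ (seg x i n ++ seg x (i + n) 1) := by
    rw [show i + n + 1 = i + (n + 1) by omega, seg_add, zero_add, seg_add]
  have e2 : seg x j (i + n + 1) = seg x j 1 ++ (seg x (j + 1) n ++ seg x (j + 1 + n) i) := by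
    rw [show i + n + 1 = 1 + (n + i) by omega, seg_add, seg_add]
  have e3 : seg x 0 i ++ (seg x i n ++ seg x (i + n) 1)
      = (seg x (j + 1 + n) i).reverse
        ++ ((seg x (j + 1) n).reverse ++ (seg x j 1).reverse) := by
    rw [← e1]
    have hq : seg x 0 (i + n + 1) = (seg x j (i + n + 1)).reverse := by
      rw [← hj']; simp
    rw [hq, e2]
    simp [List.reverse_append, List.append_assoc]
  obtain ⟨-, hmid, -⟩ := append3_inj e3 (by simp) (by simp)
  have hrr : (seg x 0 n).reverse = (seg x (j + 1) n).reverse := by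
    rw [hi', hmid]
  have heq : seg x 0 n = seg x (j + 1) n := List.reverse_injective hrr
  rw [occursAt_iff, seg_length]
  exact heq

lemma occurs_ge {x : ℕ → A}
    (hcl : ∀ u : List A, FactorOfInf u x → FactorOfInf u.reverse x) (N : ℕ) :
    ∀ n, ∃ j, N ≤ j ∧ OccursAt (seg x 0 n) x j := by
  induction N with
  | zero => exact fun n => ⟨0, le_rfl, occursAt_seg x 0 n⟩
  | succ N ih =>
    intro n
    obtain ⟨j, hjN, hj⟩ := ih n
    obtain ⟨k, hk1, hk⟩ := occurs_positive hcl (j + n)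
    have hk' : seg x 0 (j + n) = seg x k (j + n) := by
      have := occursAt_iff.mp hk; simpa using this
    have e := seg_congr hk' (t := j) (l := n) le_rfl
    have hj' : seg x 0 n = seg x j n := by
      have := occursAt_iff.mp hj; simpa using this
    refine ⟨k + j, by omega, ?_⟩
    rw [occursAt_iff, seg_length, hj']
    simpa using e

end RichAux

open RichAux in
/-- A rich infinite word is recurrent if and only if its set of factors is closed
under reversal. -/
theorem rich_recurrent_iff_closed_under_reversal {A : Type*} [DecidableEq A]
    (x : ℕ → A) (hx : RichInf x) :
    Recurrent x ↔ ∀ u : List A, FactorOfInf u x → FactorOfInf u.reverse x := by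
  constructor
  · intro hrec u hu
    obtain ⟨i, hi⟩ := hu
    have hi' : u = seg x i u.length := occursAt_iff.mp hi
    have hpref : seg x 0 (i + u.length) = seg x 0 i ++ u := by
      rw [seg_add, zero_add, ← hi']
    have hinf : u <:+: seg x 0 (i + u.length) :=
      ⟨seg x 0 i, [], by simp [hpref]⟩
    exact factor_of_infix (List.reverse_infix.mpr hinf)
      (rev_prefix_factor hx hrec (i + u.length))
  · intro hcl u hu N
    obtain ⟨i, hi⟩ := hu
    obtain ⟨j, hjN, hj⟩ := occurs_ge hcl N (i + u.length)
    have hj' : seg x 0 (i + u.length) = seg x j (i + u.length) := by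
      have := occursAt_iff.mp hj; simpa using this
    have e := seg_congr hj' (t := i) (l := u.length) le_rfl
    refine ⟨j + i, by omega, ?_⟩
    rw [occursAt_iff]
    exact (occursAt_iff.mp hi).trans (by simpa using e)
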